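/- The function Ψ is differentiable at every W ∈ (0,∞)^{ℛ̂×𝒵×𝒳}, and its partial derivative with respect to the coordinate W(r̂₀,z₀,x₀) equals p(z₀,x₀) · log₂( W(r̂₀,z₀,x₀)·p(z₀|x₀) / S(r̂₀,z₀) ). In particular, at a channel W this derivative equals p(z₀,x₀) · log₂( p(r̂₀,z₀|x₀) / p(r̂₀,z₀) ), where p(r̂,z|x) and p(r̂,z) are the induced conditional and marginal distributions of (R̂,Z). -/

import Mathlib

open Real Finset

noncomputable section

variable {ℛh 𝒵 𝒳 : Type} [Fintype ℛh] [Fintype 𝒵] [Fintype 𝒳]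
  [DecidableEq ℛh] [DecidableEq 𝒵] [DecidableEq 𝒳]

/-- Marginal `p(x) = ∑_z p(z,x)`. -/
def pXm (p : 𝒵 → 𝒳 → ℝ) (x : 𝒳) : ℝ := ∑ z, p z x

/-- Conditional `p(z|x) = p(z,x)/p(x)`. -/
def pZgX (p : 𝒵 → 𝒳 → ℝ) (z : 𝒵) (x : 𝒳) : ℝ := p z x / pXm p x

/-- `S(r̂,z) = ∑_{x'} W(r̂,z,x') p(z,x')`. -/
def SFun (p : 𝒵 → 𝒳 → ℝ) (W : ℛh × 𝒵 × 𝒳 → ℝ) (rh : ℛh) (z : 𝒵) : ℝ :=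
  ∑ x', W (rh, z, x') * p z x'

/-- `Ψ(W) = ∑_{r̂,z,x} W(r̂,z,x) p(z,x) log₂( W(r̂,z,x) p(z|x) / S(r̂,z) )`; at a channel
`W` this equals the mutual information `I(R̂,Z;X)` of the joint distribution induced by
`W` and `p`. -/
def Psi (p : 𝒵 → 𝒳 → ℝ) (W : ℛh × 𝒵 × 𝒳 → ℝ) : ℝ :=
  ∑ rh, ∑ z, ∑ x,
    W (rh, z, x) * p z x * logb 2 (W (rh, z, x) * pZgX p z x / SFun p W rh z)

/-- `Ψ` is differentiable at every `W ∈ (0,∞)^{ℛ̂×𝒵×𝒳}`, with partial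
derivative w.r.t. the coordinate `W(r̂₀,z₀,x₀)` equal to
`p(z₀,x₀) log₂( W(r̂₀,z₀,x₀) p(z₀|x₀) / S(r̂₀,z₀) )`.  In particular, at a channel `W`
this derivative equals `p(z₀,x₀) log₂( p(r̂₀,z₀|x₀) / p(r̂₀,z₀) )`, where
`p(r̂,z|x) = W(r̂,z,x) p(z|x)` and `p(r̂,z) = S(r̂,z)` are the induced conditional and
marginal distributions of `(R̂,Z)`. -/
theorem statement12
    (p : 𝒵 → 𝒳 → ℝ)
    (hp_pos : ∀ z x, 0 < p z x) (hp_sum : ∑ z, ∑ x, p z x = 1)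
    (W : ℛh × 𝒵 × 𝒳 → ℝ) (hW : ∀ i, 0 < W i)
    (rh₀ : ℛh) (z₀ : 𝒵) (x₀ : 𝒳) :
    DifferentiableAt ℝ (Psi p) W ∧
    fderiv ℝ (Psi p) W (Pi.single (rh₀, z₀, x₀) 1) =
      p z₀ x₀ * logb 2 (W (rh₀, z₀, x₀) * pZgX p z₀ x₀ / SFun p W rh₀ z₀) ∧
    ((∀ z x, ∑ rh, W (rh, z, x) = 1) →
      fderiv ℝ (Psi p) W (Pi.single (rh₀, z₀, x₀) 1) =
        p z₀ x₀ * logb 2 ((W (rh₀, z₀, x₀) * pZgX p z₀ x₀) / SFun p W rh₀ z₀)) := by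
  have hdiff : DifferentiableAt ℝ (Psi p) W := by
    have hpX : ∀ x, 0 < pXm p x := fun x =>
      Finset.sum_pos (fun z _ => hp_pos z x) ⟨z₀, Finset.mem_univ z₀⟩
    have hc : ∀ z x, 0 < pZgX p z x := fun z x => div_pos (hp_pos z x) (hpX x)
    have hS : ∀ rh z, 0 < SFun p W rh z := fun rh z =>
      Finset.sum_pos (fun x' _ => mul_pos (hW _) (hp_pos z x')) ⟨x₀, Finset.mem_univ x₀⟩
    have hproj : ∀ i : ℛh × 𝒵 × 𝒳, DifferentiableAt ℝ (fun V : ℛh × 𝒵 × 𝒳 → ℝ => V i) W :=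
      fun i => (ContinuousLinearMap.proj i : (ℛh × 𝒵 × 𝒳 → ℝ) →L[ℝ] ℝ).differentiableAt
    unfold Psi
    apply DifferentiableAt.fun_sum; intro rh _
    apply DifferentiableAt.fun_sum; intro z _
    apply DifferentiableAt.fun_sum; intro x _
    have hSd : DifferentiableAt ℝ (fun V : ℛh × 𝒵 × 𝒳 → ℝ => SFun p V rh z) W := by
      unfold SFun
      exact DifferentiableAt.fun_sum fun x' _ => (hproj (rh, z, x')).mul_const _
    have hnum : DifferentiableAt ℝ (fun V : ℛh × 𝒵 × 𝒳 → ℝ => V (rh,z,x) * pZgX p z x) W :=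
      (hproj (rh,z,x)).mul_const _
    have hinner : DifferentiableAt ℝ
        (fun V : ℛh × 𝒵 × 𝒳 → ℝ => V (rh,z,x) * pZgX p z x / SFun p V rh z) W := by
      simp only [div_eq_mul_inv]
      exact hnum.mul (hSd.inv (ne_of_gt (hS rh z)))
    have hpos : 0 < W (rh,z,x) * pZgX p z x / SFun p W rh z :=
      div_pos (mul_pos (hW _) (hc z x)) (hS rh z)
    have hlog : DifferentiableAt ℝ
        (fun V : ℛh × 𝒵 × 𝒳 → ℝ => Real.log (V (rh,z,x) * pZgX p z x / SFun p V rh z)) W :=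
      hinner.log (ne_of_gt hpos)
    simp only [Real.logb, div_eq_mul_inv (b := Real.log 2)]
    exact ((hproj (rh,z,x)).mul_const (p z x)).mul (hlog.mul_const (Real.log 2)⁻¹)
  have key : fderiv ℝ (Psi p) W (Pi.single (rh₀, z₀, x₀) 1) =
      p z₀ x₀ * logb 2 (W (rh₀, z₀, x₀) * pZgX p z₀ x₀ / SFun p W rh₀ z₀) := by
    have hpX : ∀ x, 0 < pXm p x := fun x =>
      Finset.sum_pos (fun z _ => hp_pos z x) ⟨z₀, Finset.mem_univ z₀⟩
    have hc : ∀ z x, 0 < pZgX p z x := fun z x => div_pos (hp_pos z x) (hpX x)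
    have hS : ∀ rh z, 0 < SFun p W rh z := fun rh z =>
      Finset.sum_pos (fun x' _ => mul_pos (hW _) (hp_pos z x')) ⟨x₀, Finset.mem_univ x₀⟩
    set e : ℛh × 𝒵 × 𝒳 → ℝ := Pi.single (rh₀, z₀, x₀) 1 with he
    have h0 : W + (0:ℝ) • e = W := by simp
    have hu : ∀ j, HasDerivAt (fun t : ℝ => (W + t • e) j) (e j) 0 := by
      intro j
      simp only [Pi.add_apply, Pi.smul_apply, smul_eq_mul]
      simpa using ((hasDerivAt_id (0:ℝ)).mul_const (e j)).const_add (W j)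
    have hterm : ∀ rh z x, HasDerivAt (fun t : ℝ =>
          (W + t • e) (rh,z,x) * p z x *
            Real.logb 2 ((W + t • e) (rh,z,x) * pZgX p z x / SFun p (W + t • e) rh z))
        (e (rh,z,x) * p z x * Real.logb 2 (W (rh,z,x) * pZgX p z x / SFun p W rh z)
          + (e (rh,z,x) * p z x
              - W (rh,z,x) * p z x * (∑ x', e (rh,z,x') * p z x') / SFun p W rh z)
            / Real.log 2) 0 := by
      intro rh z x
      have hu' := hu (rh,z,x)
      have hs : HasDerivAt (fun t : ℝ => SFun p (W + t • e) rh z)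
          (∑ x', e (rh,z,x') * p z x') 0 := by
        unfold SFun
        exact HasDerivAt.fun_sum fun x' _ => (hu (rh,z,x')).mul_const _
      have hnum : HasDerivAt (fun t : ℝ => (W + t • e) (rh,z,x) * pZgX p z x)
          (e (rh,z,x) * pZgX p z x) 0 := hu'.mul_const _
      have hsne : SFun p (W + (0:ℝ) • e) rh z ≠ 0 := by rw [h0]; exact ne_of_gt (hS rh z)
      have hg := hnum.fun_div hs hsne
      have hgne : (W + (0:ℝ) • e) (rh,z,x) * pZgX p z x / SFun p (W + (0:ℝ) • e) rh z ≠ 0 := by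
        rw [h0]; exact ne_of_gt (div_pos (mul_pos (hW _) (hc z x)) (hS rh z))
      have hlog := hg.log hgne
      have hfin := (hu'.mul_const (p z x)).fun_mul (hlog.div_const (Real.log 2))
      simp only [Real.logb]
      refine hfin.congr_deriv ?_
      simp only [h0]
      have h1 : SFun p W rh z ≠ 0 := ne_of_gt (hS rh z)
      have h2 : W (rh,z,x) ≠ 0 := ne_of_gt (hW _)
      have h3 : pZgX p z x ≠ 0 := ne_of_gt (hc z x)
      have h4 : Real.log 2 ≠ 0 := ne_of_gt (Real.log_pos one_lt_two)
      field_simp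
    have hsum : HasDerivAt (fun t : ℝ => Psi p (W + t • e))
        (∑ rh, ∑ z, ∑ x,
          (e (rh,z,x) * p z x * Real.logb 2 (W (rh,z,x) * pZgX p z x / SFun p W rh z)
            + (e (rh,z,x) * p z x
                - W (rh,z,x) * p z x * (∑ x', e (rh,z,x') * p z x') / SFun p W rh z)
              / Real.log 2)) 0 := by
      unfold Psi
      exact HasDerivAt.fun_sum fun rh _ => HasDerivAt.fun_sum fun z _ =>
        HasDerivAt.fun_sum fun x _ => hterm rh z x
    have he0 : ∀ j, j ≠ (rh₀,z₀,x₀) → e j = 0 := fun j hj => Pi.single_eq_of_ne hj _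
    have he1 : e (rh₀,z₀,x₀) = 1 := Pi.single_eq_same _ _
    have hA : (∑ rh, ∑ z, ∑ x, e (rh,z,x) * p z x) = p z₀ x₀ := by
      rw [Finset.sum_eq_single rh₀]
      · rw [Finset.sum_eq_single z₀]
        · rw [Finset.sum_eq_single x₀]
          · rw [he1, one_mul]
          · intro x _ hx; rw [he0 _ (by simp [Prod.ext_iff, hx]), zero_mul]
          · intro h; exact absurd (Finset.mem_univ _) h
        · intro z _ hz
          exact Finset.sum_eq_zero fun x _ => by
            rw [he0 _ (by simp [Prod.ext_iff, hz]), zero_mul]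
        · intro h; exact absurd (Finset.mem_univ _) h
      · intro rh _ hrh
        exact Finset.sum_eq_zero fun z _ => Finset.sum_eq_zero fun x _ => by
          rw [he0 _ (by simp [Prod.ext_iff, hrh]), zero_mul]
      · intro h; exact absurd (Finset.mem_univ _) h
    have h_first : (∑ rh, ∑ z, ∑ x,
        e (rh,z,x) * p z x * Real.logb 2 (W (rh,z,x) * pZgX p z x / SFun p W rh z))
        = p z₀ x₀ * Real.logb 2 (W (rh₀,z₀,x₀) * pZgX p z₀ x₀ / SFun p W rh₀ z₀) := by
      rw [Finset.sum_eq_single rh₀]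
      · rw [Finset.sum_eq_single z₀]
        · rw [Finset.sum_eq_single x₀]
          · rw [he1, one_mul]
          · intro x _ hx; rw [he0 _ (by simp [Prod.ext_iff, hx]), zero_mul, zero_mul]
          · intro h; exact absurd (Finset.mem_univ _) h
        · intro z _ hz
          exact Finset.sum_eq_zero fun x _ => by
            rw [he0 _ (by simp [Prod.ext_iff, hz]), zero_mul, zero_mul]
        · intro h; exact absurd (Finset.mem_univ _) h
      · intro rh _ hrh
        exact Finset.sum_eq_zero fun z _ => Finset.sum_eq_zero fun x _ => by
          rw [he0 _ (by simp [Prod.ext_iff, hrh]), zero_mul, zero_mul]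
      · intro h; exact absurd (Finset.mem_univ _) h
    have hB : ∀ rh z,
        (∑ x, W (rh,z,x) * p z x * (∑ x', e (rh,z,x') * p z x') / SFun p W rh z)
        = ∑ x', e (rh,z,x') * p z x' := by
      intro rh z
      have hrw : (∑ x, W (rh,z,x) * p z x * (∑ x', e (rh,z,x') * p z x') / SFun p W rh z)
          = (∑ x, W (rh,z,x) * p z x) * ((∑ x', e (rh,z,x') * p z x') / SFun p W rh z) := by
        rw [Finset.sum_mul]
        exact Finset.sum_congr rfl fun x _ => by ring
      rw [hrw, show (∑ x, W (rh,z,x) * p z x) = SFun p W rh z from rfl]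
      rw [mul_comm, div_mul_cancel₀ _ (ne_of_gt (hS rh z))]
    have h_second : (∑ rh, ∑ z, ∑ x,
        (e (rh,z,x) * p z x
          - W (rh,z,x) * p z x * (∑ x', e (rh,z,x') * p z x') / SFun p W rh z)
        / Real.log 2) = 0 := by
      simp only [← Finset.sum_div]
      rw [div_eq_zero_iff]; left
      simp only [Finset.sum_sub_distrib]
      rw [hA]
      simp only [hB]
      rw [hA, sub_self]
    have hval : (∑ rh, ∑ z, ∑ x,
        (e (rh,z,x) * p z x * Real.logb 2 (W (rh,z,x) * pZgX p z x / SFun p W rh z)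
          + (e (rh,z,x) * p z x
              - W (rh,z,x) * p z x * (∑ x', e (rh,z,x') * p z x') / SFun p W rh z)
            / Real.log 2))
        = p z₀ x₀ * Real.logb 2 (W (rh₀,z₀,x₀) * pZgX p z₀ x₀ / SFun p W rh₀ z₀) := by
      simp only [Finset.sum_add_distrib]
      rw [h_first, h_second, add_zero]
    have hline : HasDerivAt (fun t : ℝ => W + t • e) e 0 := by
      simpa using ((hasDerivAt_id (0:ℝ)).smul_const e).const_add W
    have hF : HasFDerivAt (Psi p) (fderiv ℝ (Psi p) W) ((fun t : ℝ => W + t • e) 0) := by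
      rw [show (fun t : ℝ => W + t • e) 0 = W from by simp]
      exact hdiff.hasFDerivAt
    have hcomp : HasDerivAt (fun t : ℝ => Psi p (W + t • e))
        (fderiv ℝ (Psi p) W e) 0 := by
      exact hF.comp_hasDerivAt 0 hline
    exact hcomp.unique (hval ▸ hsum)
  exact ⟨hdiff, key, fun _ => key⟩

end
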